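/- Let n ≥ 1 and Δ ∈ ℝ^{n×n} be entrywise nonnegative with spectral radius ρ(Δ) < 1, and write H̄ = (I − Δ)^{-1}. Then H̄_{jj} ≥ 1 for every j (so 2H̄_{jj} − 1 > 0), and for all i, j the minimum of (A^{-1})_{ij} over all real matrices A with |A − I| ≤ Δ entrywise equals −H̄_{ij} if i ≠ j, and equals H̄_{jj}/(2H̄_{jj} − 1) if i = j. (Lower-bound part of Rohn's theorem on the inverse interval matrix of [I − Δ, I + Δ].) -/

import Mathlib

open Matrix

/-- Spectral radius of a real square matrix: the maximum modulus of its
complex eigenvalues, formalized via the spectral radius of the matrix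
viewed over `ℂ`. -/
noncomputable def specRad {n : ℕ} (M : Matrix (Fin n) (Fin n) ℝ) : ENNReal :=
  spectralRadius ℂ (M.map (algebraMap ℝ ℂ))

section RohnAux

open Filter Topology

attribute [local instance] Matrix.linftyOpNormedAddCommGroup Matrix.linftyOpNormedRing
  Matrix.linftyOpNormedAlgebra

variable {n : ℕ}

private lemma entry_nnnorm_le (M : Matrix (Fin n) (Fin n) ℂ) (i j : Fin n) : ‖M i j‖₊ ≤ ‖M‖₊ := by
  rw [Matrix.linfty_opNNNorm_def]
  exact le_trans
    (Finset.single_le_sum (f := fun k => ‖M i k‖₊) (fun k _ => zero_le) (Finset.mem_univ j))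
    (Finset.le_sup (f := fun i => ∑ j, ‖M i j‖₊) (Finset.mem_univ i))

private lemma det_one_sub_isUnit (Δ : Matrix (Fin n) (Fin n) ℝ)
    (hρ : specRad Δ < 1) :
    IsUnit ((1 : Matrix (Fin n) (Fin n) ℝ) - Δ).det := by
  rw [isUnit_iff_ne_zero]
  intro h0
  have h1 : (1 : ℂ) ∈ spectrum ℂ (Δ.map (algebraMap ℝ ℂ)) := by
    rw [spectrum.mem_iff]
    have halg : (algebraMap ℂ (Matrix (Fin n) (Fin n) ℂ)) 1 - Δ.map (algebraMap ℝ ℂ)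
        = (algebraMap ℝ ℂ).mapMatrix ((1 : Matrix (Fin n) (Fin n) ℝ) - Δ) := by
      rw [map_sub ((algebraMap ℝ ℂ).mapMatrix), RingHom.mapMatrix_apply]
      congr 1
      rw [_root_.map_one]
      exact (Matrix.map_one _ (map_zero _) (map_one _)).symm
    rw [halg, Matrix.isUnit_iff_isUnit_det, ← RingHom.map_det, h0, map_zero]
    exact not_isUnit_zero
  have hge : (1 : ENNReal) ≤ specRad Δ := by
    have := le_iSup₂ (f := fun (k : ℂ) (_ : k ∈ spectrum ℂ (Δ.map (algebraMap ℝ ℂ))) =>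
      (‖k‖₊ : ENNReal)) 1 h1
    simpa [specRad, spectralRadius] using this
  exact absurd hρ (not_lt.mpr hge)

private lemma pow_entry_tendsto_zero (Δ : Matrix (Fin n) (Fin n) ℝ)
    (hρ : specRad Δ < 1) (i j : Fin n) :
    Tendsto (fun m => (Δ ^ m) i j) atTop (𝓝 0) := by
  haveI : CompleteSpace (Matrix (Fin n) (Fin n) ℂ) := FiniteDimensional.complete ℂ _
  set Mc : Matrix (Fin n) (Fin n) ℂ := Δ.map (algebraMap ℝ ℂ) with hMc
  obtain ⟨r, hr1, hr2⟩ := ENNReal.lt_iff_exists_nnreal_btwn.mp hρ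
  have hrlt1 : r < 1 := by exact_mod_cast hr2
  have hgel := spectrum.pow_nnnorm_pow_one_div_tendsto_nhds_spectralRadius Mc
  have hev : ∀ᶠ m : ℕ in atTop, (‖Mc ^ m‖₊ : ENNReal) ^ (1 / (m : ℝ)) < (r : ENNReal) :=
    hgel.eventually_lt_const hr1
  have hev2 : ∀ᶠ m : ℕ in atTop, ‖Mc ^ m‖₊ ≤ r ^ m := by
    filter_upwards [hev, eventually_ge_atTop 1] with m hm hm1
    have hm0 : (m : ℝ) ≠ 0 := by positivity
    have h1 : ((‖Mc ^ m‖₊ : ENNReal) ^ (1 / (m : ℝ))) ^ (m : ℝ) ≤ (r : ENNReal) ^ (m : ℝ) :=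
      ENNReal.rpow_le_rpow hm.le (by positivity)
    rw [← ENNReal.rpow_mul, one_div, inv_mul_cancel₀ hm0, ENNReal.rpow_one,
      ENNReal.rpow_natCast, ← ENNReal.coe_pow, ENNReal.coe_le_coe] at h1
    exact h1
  have hbound : ∀ᶠ m : ℕ in atTop, ‖(Δ ^ m) i j‖ ≤ (r : ℝ) ^ m := by
    filter_upwards [hev2] with m hm
    have hmap : (Mc ^ m) i j = algebraMap ℝ ℂ ((Δ ^ m) i j) := by
      rw [hMc, ← RingHom.mapMatrix_apply, ← map_pow, RingHom.mapMatrix_apply, Matrix.map_apply]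
    have h1 : ‖(Δ ^ m) i j‖₊ = ‖(Mc ^ m) i j‖₊ := by
      rw [hmap]; exact (Complex.nnnorm_real _).symm
    have h3 : ‖(Δ ^ m) i j‖₊ ≤ r ^ m := h1 ▸ ((entry_nnnorm_le _ i j).trans hm)
    exact_mod_cast h3
  exact squeeze_zero_norm' hbound (tendsto_pow_atTop_nhds_zero_of_lt_one r.coe_nonneg hrlt1)

private lemma diag_pm_eq (j : Fin n) :
    (Matrix.diagonal (fun k => if k = j then (-1:ℝ) else 1))
      = 1 - (2:ℝ) • Matrix.single j j (1:ℝ) := by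
  ext a b
  by_cases hab : a = b <;> by_cases ha : a = j <;> by_cases hb : b = j <;>
    simp_all [Matrix.diagonal_apply, Matrix.one_apply, Matrix.single,
      Matrix.of_apply, eq_comm] <;> norm_num

private lemma EHE_eq (j : Fin n) (H : Matrix (Fin n) (Fin n) ℝ) :
    Matrix.single j j (1:ℝ) * H * Matrix.single j j (1:ℝ)
      = (H j j) • Matrix.single j j (1:ℝ) := by
  ext a b
  by_cases ha : a = j <;> by_cases hb : b = j <;>
    simp_all [Matrix.mul_apply, Matrix.single, Matrix.of_apply, ite_and, eq_comm]

private lemma HEH_eq (j : Fin n) (H : Matrix (Fin n) (Fin n) ℝ) :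
    (H * Matrix.single j j (1:ℝ) * H) j j = H j j * H j j := by
  simp [Matrix.mul_apply, Matrix.single, Matrix.of_apply, ite_and]

private lemma diag_sq_one (s : Fin n → ℝ) (hs2 : ∀ k, s k * s k = 1) :
    Matrix.diagonal s * Matrix.diagonal s = 1 := by
  rw [Matrix.diagonal_mul_diagonal]
  rw [show (fun i => s i * s i) = fun _ => (1:ℝ) from funext hs2, Matrix.diagonal_one]

end RohnAux

/-- Lower-bound part of Rohn's theorem: with `H̄ = (I - Δ)⁻¹`, one has
`H̄_{jj} ≥ 1` (so `2H̄_{jj} - 1 > 0`) and, over all `A` with `|A - I| ≤ Δ`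
entrywise, the minimum of `(A⁻¹)_{ij}` equals `-H̄_{ij}` for `i ≠ j` and
`H̄_{jj}/(2H̄_{jj} - 1)` for `i = j`. -/
theorem stmt_2 {n : ℕ} (hn : 1 ≤ n) (Δ : Matrix (Fin n) (Fin n) ℝ)
    (hΔ : ∀ i j, 0 ≤ Δ i j)
    (hρ : specRad Δ < 1)
    (Hbar : Matrix (Fin n) (Fin n) ℝ)
    (hHbar : Hbar = ((1 : Matrix (Fin n) (Fin n) ℝ) - Δ)⁻¹) :
    (∀ j, 1 ≤ Hbar j j) ∧
    (∀ j, 0 < 2 * Hbar j j - 1) ∧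
    (∀ i j, i ≠ j → IsLeast
      {v : ℝ | ∃ A : Matrix (Fin n) (Fin n) ℝ,
        (∀ i' j', |A i' j' - (1 : Matrix (Fin n) (Fin n) ℝ) i' j'| ≤ Δ i' j') ∧
        v = A⁻¹ i j}
      (-Hbar i j)) ∧
    (∀ j, IsLeast
      {v : ℝ | ∃ A : Matrix (Fin n) (Fin n) ℝ,
        (∀ i' j', |A i' j' - (1 : Matrix (Fin n) (Fin n) ℝ) i' j'| ≤ Δ i' j') ∧
        v = A⁻¹ j j}
      (Hbar j j / (2 * Hbar j j - 1))) := by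
  classical
  open Filter Topology in
  set B : Matrix (Fin n) (Fin n) ℝ := 1 - Δ with hB
  have hmv : ∀ (M : Matrix (Fin n) (Fin n) ℝ) (w : Fin n → ℝ) (i : Fin n),
      (M *ᵥ w) i = ∑ k, M i k * w k := fun M w i => rfl
  have hdet : IsUnit B.det := det_one_sub_isUnit Δ hρ
  have hBH : B * Hbar = 1 := by rw [hHbar]; exact Matrix.mul_nonsing_inv _ hdet
  have hHB : Hbar * B = 1 := by rw [hHbar]; exact Matrix.nonsing_inv_mul _ hdet
  -- nonnegativity of powers of Δ
  have hpow : ∀ (m : ℕ) i j, 0 ≤ (Δ ^ m) i j := by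
    intro m
    induction m with
    | zero => intro i j; by_cases h : i = j <;> simp [pow_zero, Matrix.one_apply, h]
    | succ m ih =>
      intro i j
      rw [pow_succ, Matrix.mul_apply]
      exact Finset.sum_nonneg fun k _ => mul_nonneg (ih i k) (hΔ k j)
  -- H̄ ≥ 0 entrywise
  have hHnn : ∀ i j, 0 ≤ Hbar i j := by
    intro i j
    have key : ∀ m : ℕ, (∑ k ∈ Finset.range m, Δ ^ k) = Hbar - Δ ^ m * Hbar := by
      intro m
      have h1 : (∑ k ∈ Finset.range m, Δ ^ k) * (Δ - 1) = Δ ^ m - 1 := geom_sum_mul Δ m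
      have h2 : (∑ k ∈ Finset.range m, Δ ^ k) * B = 1 - Δ ^ m := by
        rw [hB, ← neg_sub Δ 1, mul_neg, h1, neg_sub]
      calc (∑ k ∈ Finset.range m, Δ ^ k)
          = (∑ k ∈ Finset.range m, Δ ^ k) * (B * Hbar) := by rw [hBH, mul_one]
        _ = ((∑ k ∈ Finset.range m, Δ ^ k) * B) * Hbar := by rw [mul_assoc]
        _ = (1 - Δ ^ m) * Hbar := by rw [h2]
        _ = Hbar - Δ ^ m * Hbar := by rw [sub_mul, one_mul]
    have hle : ∀ m : ℕ, (Δ ^ m * Hbar) i j ≤ Hbar i j := by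
      intro m
      have h0 : 0 ≤ (∑ k ∈ Finset.range m, Δ ^ k) i j := by
        rw [Matrix.sum_apply]
        exact Finset.sum_nonneg fun k _ => hpow k i j
      have h1 : (∑ k ∈ Finset.range m, Δ ^ k) i j = Hbar i j - (Δ ^ m * Hbar) i j := by
        rw [key m, Matrix.sub_apply]
      linarith [h1 ▸ h0]
    have htend : Tendsto (fun m => (Δ ^ m * Hbar) i j) atTop (𝓝 0) := by
      simp only [Matrix.mul_apply]
      have h0 : Tendsto (fun m => ∑ k, (Δ ^ m) i k * Hbar k j) atTop
          (𝓝 (∑ k : Fin n, 0 * Hbar k j)) :=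
        tendsto_finset_sum _ fun k _ => (pow_entry_tendsto_zero Δ hρ i k).mul_const (Hbar k j)
      simpa using h0
    exact le_of_tendsto htend (Filter.Eventually.of_forall hle)
  -- H̄ = 1 + Δ * H̄
  have hHsum : Hbar = 1 + Δ * Hbar := by
    have h : Hbar - Δ * Hbar = 1 := by rw [← one_sub_mul]; exact hB ▸ hBH
    exact eq_add_of_sub_eq' (by rw [← h]; abel)
  have hdiag : ∀ j, 1 ≤ Hbar j j := by
    intro j
    have h1 : Hbar j j = 1 + (Δ * Hbar) j j := by
      conv_lhs => rw [hHsum]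
      rw [Matrix.add_apply, Matrix.one_apply_eq]
    have h2 : 0 ≤ (Δ * Hbar) j j := by
      rw [Matrix.mul_apply]
      exact Finset.sum_nonneg fun k _ => mul_nonneg (hΔ j k) (hHnn k j)
    linarith
  have hpos : ∀ j, 0 < 2 * Hbar j j - 1 := fun j => by linarith [hdiag j]
  -- every A in the interval is invertible
  have hAinv : ∀ A : Matrix (Fin n) (Fin n) ℝ,
      (∀ i' j', |A i' j' - (1 : Matrix (Fin n) (Fin n) ℝ) i' j'| ≤ Δ i' j') →
      IsUnit A.det := by
    intro A hA
    rw [isUnit_iff_ne_zero]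
    intro h0
    obtain ⟨v, hv0, hv⟩ := (Matrix.exists_mulVec_eq_zero_iff).mpr h0
    set u : Fin n → ℝ := fun k => |v k| with hu
    have hub : ∀ i, u i ≤ (Δ *ᵥ u) i := by
      intro i
      have h1 : v i = ∑ k, ((1 : Matrix (Fin n) (Fin n) ℝ) i k - A i k) * v k := by
        have h2 : ∑ k, A i k * v k = 0 := by
          have h4 := congrFun hv i
          rw [hmv] at h4
          exact h4
        have h3 : ∑ k, (1 : Matrix (Fin n) (Fin n) ℝ) i k * v k = v i := by
          simp [Matrix.one_apply]
        calc v i = ∑ k, (1 : Matrix (Fin n) (Fin n) ℝ) i k * v k - ∑ k, A i k * v k := by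
              rw [h2, h3, sub_zero]
          _ = ∑ k, ((1 : Matrix (Fin n) (Fin n) ℝ) i k - A i k) * v k := by
              rw [← Finset.sum_sub_distrib]; congr 1; ext k; ring
      calc u i = |v i| := rfl
        _ ≤ ∑ k, |((1 : Matrix (Fin n) (Fin n) ℝ) i k - A i k) * v k| := by
            rw [h1]; exact Finset.abs_sum_le_sum_abs _ _
        _ ≤ ∑ k, Δ i k * u k := by
            apply Finset.sum_le_sum
            intro k _
            rw [abs_mul]
            apply mul_le_mul_of_nonneg_right _ (abs_nonneg _)
            rw [abs_sub_comm]
            exact hA i k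
        _ = (Δ *ᵥ u) i := (hmv Δ u i).symm
    have hBu : ∀ i, (B *ᵥ u) i ≤ 0 := by
      intro i
      have h1 : (B *ᵥ u) i = u i - (Δ *ᵥ u) i := by
        rw [hB, Matrix.sub_mulVec, Pi.sub_apply, Matrix.one_mulVec]
      rw [h1]
      linarith [hub i]
    have huHBu : u = Hbar *ᵥ (B *ᵥ u) := by
      rw [Matrix.mulVec_mulVec, hHB, Matrix.one_mulVec]
    have hu0 : ∀ i, u i ≤ 0 := by
      intro i
      conv_lhs => rw [huHBu]
      rw [hmv]
      apply Finset.sum_nonpos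
      intro k _
      exact mul_nonpos_of_nonneg_of_nonpos (hHnn i k) (hBu k)
    apply hv0
    funext k
    exact abs_eq_zero.mp (le_antisymm (hu0 k) (abs_nonneg (v k)))
  -- core column estimates for any A in the interval
  have hcol : ∀ (A : Matrix (Fin n) (Fin n) ℝ),
      (∀ i' j', |A i' j' - (1 : Matrix (Fin n) (Fin n) ℝ) i' j'| ≤ Δ i' j') →
      ∀ j, (∀ i, -Hbar i j ≤ A⁻¹ i j) ∧ Hbar j j / (2 * Hbar j j - 1) ≤ A⁻¹ j j := by
    intro A hA j
    have hAd := hAinv A hA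
    set x : Fin n → ℝ := fun k => A⁻¹ k j with hx
    set u : Fin n → ℝ := fun k => |x k| with hu
    set e : Fin n → ℝ := fun i => (1 : Matrix (Fin n) (Fin n) ℝ) i j with he
    have hAx : ∀ i, ∑ k, A i k * x k = e i := by
      intro i
      have h1 := Matrix.mul_nonsing_inv A hAd
      have h2 : (A * A⁻¹) i j = (1 : Matrix (Fin n) (Fin n) ℝ) i j := by rw [h1]
      rw [Matrix.mul_apply] at h2
      exact h2
    have hxi : ∀ i, x i = e i + ∑ k, ((1 : Matrix (Fin n) (Fin n) ℝ) i k - A i k) * x k := by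
      intro i
      have h3 : ∑ k, (1 : Matrix (Fin n) (Fin n) ℝ) i k * x k = x i := by
        simp [Matrix.one_apply]
      calc x i = ∑ k, (1 : Matrix (Fin n) (Fin n) ℝ) i k * x k := h3.symm
        _ = e i + (∑ k, (1 : Matrix (Fin n) (Fin n) ℝ) i k * x k - ∑ k, A i k * x k) := by
            rw [hAx i]; ring
        _ = e i + ∑ k, ((1 : Matrix (Fin n) (Fin n) ℝ) i k - A i k) * x k := by
            rw [← Finset.sum_sub_distrib]; congr 2; ext k; ring
    have hperturb : ∀ i, |∑ k, ((1 : Matrix (Fin n) (Fin n) ℝ) i k - A i k) * x k|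
        ≤ (Δ *ᵥ u) i := by
      intro i
      calc |∑ k, ((1 : Matrix (Fin n) (Fin n) ℝ) i k - A i k) * x k|
          ≤ ∑ k, |((1 : Matrix (Fin n) (Fin n) ℝ) i k - A i k) * x k| :=
            Finset.abs_sum_le_sum_abs _ _
        _ ≤ ∑ k, Δ i k * u k := by
            apply Finset.sum_le_sum
            intro k _
            rw [abs_mul]
            apply mul_le_mul_of_nonneg_right _ (abs_nonneg _)
            rw [abs_sub_comm]
            exact hA i k
        _ = (Δ *ᵥ u) i := (hmv Δ u i).symm
    have henn : ∀ i, 0 ≤ e i := by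
      intro i
      by_cases h : i = j <;> simp [he, Matrix.one_apply, h]
    have hBmv : ∀ i, (B *ᵥ u) i = u i - (Δ *ᵥ u) i := by
      intro i
      rw [hB, Matrix.sub_mulVec, Pi.sub_apply, Matrix.one_mulVec]
    have hkey1 : ∀ i, (B *ᵥ u) i ≤ e i := by
      intro i
      have h1 : u i ≤ e i + (Δ *ᵥ u) i := by
        calc u i = |x i| := rfl
          _ = |e i + ∑ k, ((1 : Matrix (Fin n) (Fin n) ℝ) i k - A i k) * x k| := by
              rw [← hxi i]
          _ ≤ |e i| + |∑ k, ((1 : Matrix (Fin n) (Fin n) ℝ) i k - A i k) * x k| :=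
              abs_add_le _ _
          _ ≤ e i + (Δ *ᵥ u) i := by
              rw [abs_of_nonneg (henn i)]
              exact add_le_add le_rfl (hperturb i)
      rw [hBmv i]
      linarith
    set r : Fin n → ℝ := fun i => e i - (B *ᵥ u) i with hr
    have hrnn : ∀ i, 0 ≤ r i := fun i => by simp only [hr]; linarith [hkey1 i]
    have hue : ∀ i, u i = Hbar i j - ∑ k, Hbar i k * r k := by
      intro i
      have h1 : u = Hbar *ᵥ (B *ᵥ u) := by
        rw [Matrix.mulVec_mulVec, hHB, Matrix.one_mulVec]
      have h2 : (B *ᵥ u) = fun i => e i - r i := by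
        funext i; simp only [hr]; ring
      have h3 : u i = ∑ k, Hbar i k * (e k - r k) := by
        conv_lhs => rw [h1, h2]
        rw [hmv]
      have h4 : ∑ k, Hbar i k * (e k - r k)
          = ∑ k, Hbar i k * e k - ∑ k, Hbar i k * r k := by
        rw [← Finset.sum_sub_distrib]; congr 1; ext k; ring
      have h5 : ∑ k, Hbar i k * e k = Hbar i j := by
        simp [he, Matrix.one_apply, mul_ite, mul_one, mul_zero]
      rw [h3, h4, h5]
    have hHrnn : ∀ i, 0 ≤ ∑ k, Hbar i k * r k := by
      intro i
      exact Finset.sum_nonneg fun k _ => mul_nonneg (hHnn i k) (hrnn k)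
    have huH : ∀ i, u i ≤ Hbar i j := by
      intro i
      rw [hue i]
      linarith [hHrnn i]
    constructor
    · -- all-entries lower bound
      intro i
      have h1 : -u i ≤ x i := neg_abs_le (x i)
      have h2 : -Hbar i j ≤ -u i := by linarith [huH i]
      exact le_trans h2 h1
    · -- diagonal lower bound
      have hej : e j = 1 := by simp [he, Matrix.one_apply]
      have hd1 : 1 - (Δ *ᵥ u) j ≤ x j := by
        have h2 := hperturb j
        have h3 : -(Δ *ᵥ u) j ≤ ∑ k, ((1 : Matrix (Fin n) (Fin n) ℝ) j k - A j k) * x k :=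
          neg_le_of_abs_le h2
        have h4 := hxi j
        rw [hej] at h4
        linarith
      have hd2 : (Δ *ᵥ u) j = u j - 1 + r j := by
        have h2 : r j = e j - (B *ᵥ u) j := rfl
        rw [hej, hBmv j] at h2
        linarith
      have hd3 : 2 - u j - r j ≤ x j := by
        rw [hd2] at hd1; linarith
      have hβ := hdiag j
      have hHrj : Hbar j j * r j ≤ ∑ k, Hbar j k * r k :=
        Finset.single_le_sum (f := fun k => Hbar j k * r k)
          (fun k _ => mul_nonneg (hHnn j k) (hrnn k)) (Finset.mem_univ j)
      have hd4 : u j ≤ Hbar j j * (1 - r j) := by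
        rw [hue j]
        nlinarith [hHrj]
      have hrj1 : r j ≤ 1 := by
        have h0 : 0 ≤ u j := abs_nonneg _
        nlinarith [hd4, hβ]
      by_cases hxj : 0 ≤ x j
      · have huxj : u j = x j := abs_of_nonneg hxj
        rw [huxj] at hd3 hd4
        rw [div_le_iff₀ (hpos j)]
        nlinarith [hd3, hd4, hβ, hrnn j]
      · exfalso
        push_neg at hxj
        have huxj : u j = -x j := abs_of_neg hxj
        rw [huxj] at hd3
        linarith [hrj1, hd3]
  refine ⟨hdiag, hpos, ?_, ?_⟩
  · -- off-diagonal IsLeast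
    intro i j hij
    constructor
    · -- membership: A = 1 - SΔS
      set s : Fin n → ℝ := fun k => if k = i then -1 else 1 with hs
      set S : Matrix (Fin n) (Fin n) ℝ := Matrix.diagonal s with hS
      have hs2 : ∀ k, s k * s k = 1 := by
        intro k; by_cases h : k = i <;> simp [hs, h]
      have hS2 : S * S = 1 := by
        rw [hS]; exact diag_sq_one s hs2
      set A : Matrix (Fin n) (Fin n) ℝ := 1 - S * Δ * S with hA
      refine ⟨A, ?_, ?_⟩
      · intro i' j'
        have h1 : A i' j' - (1 : Matrix (Fin n) (Fin n) ℝ) i' j' = -(S * Δ * S) i' j' := by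
          rw [hA, Matrix.sub_apply]; ring
        rw [h1, abs_neg]
        have h2 : (S * Δ * S) i' j' = s i' * Δ i' j' * s j' := by
          rw [hS, Matrix.mul_diagonal, Matrix.diagonal_mul]
        rw [h2, abs_mul, abs_mul]
        have habs : ∀ k, |s k| = 1 := by
          intro k; by_cases h : k = i <;> simp [hs, h]
        rw [habs i', habs j', one_mul, mul_one, abs_of_nonneg (hΔ i' j')]
      · -- value: A⁻¹ i j = -Hbar i j
        have hSBS : A = S * B * S := by
          rw [hA, hS, hB]
          rw [Matrix.mul_sub, Matrix.sub_mul, mul_one]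
          rw [show Matrix.diagonal s * Matrix.diagonal s = (1 : Matrix (Fin n) (Fin n) ℝ) from
            hS ▸ hS2]
        have hright : A * (S * Hbar * S) = 1 := by
          rw [hSBS]
          calc S * B * S * (S * Hbar * S) = S * B * (S * S) * Hbar * S := by
                noncomm_ring
            _ = S * B * Hbar * S := by rw [hS2, mul_one]
            _ = S * (B * Hbar) * S := by noncomm_ring
            _ = S * S := by rw [hBH, mul_one]
            _ = 1 := hS2
        have hAinveq : A⁻¹ = S * Hbar * S := Matrix.inv_eq_right_inv hright
        rw [hAinveq]
        have h3 : (S * Hbar * S) i j = s i * Hbar i j * s j := by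
          rw [hS, Matrix.mul_diagonal, Matrix.diagonal_mul]
        rw [h3]
        have hsi : s i = -1 := by simp [hs]
        have hsj : s j = 1 := by
          have h9 : j ≠ i := Ne.symm hij
          simp [hs, h9]
        rw [hsi, hsj]
        ring
    · -- lower bound
      rintro v ⟨A, hA, rfl⟩
      exact (hcol A hA j).1 i
  · -- diagonal IsLeast
    intro j
    constructor
    · -- membership: A = 1 - Δ D
      set d : Fin n → ℝ := fun k => if k = j then -1 else 1 with hd
      set D : Matrix (Fin n) (Fin n) ℝ := Matrix.diagonal d with hD
      have hd2 : ∀ k, d k * d k = 1 := by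
        intro k; by_cases h : k = j <;> simp [hd, h]
      have hD2 : D * D = 1 := by
        rw [hD]; exact diag_sq_one d hd2
      set β : ℝ := Hbar j j with hβdef
      have hβ1 : (1 : ℝ) ≤ β := hdiag j
      have h2β : (1 : ℝ) - 2 * β ≠ 0 := by intro h; nlinarith
      have h2β' : 2 * β - 1 ≠ 0 := ne_of_gt (by nlinarith)
      set c : ℝ := 2 / (1 - 2 * β) with hc
      set E : Matrix (Fin n) (Fin n) ℝ := Matrix.single j j 1 with hE
      set A : Matrix (Fin n) (Fin n) ℝ := 1 - Δ * D with hA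
      refine ⟨A, ?_, ?_⟩
      · intro i' j'
        have h1 : A i' j' - (1 : Matrix (Fin n) (Fin n) ℝ) i' j' = -(Δ * D) i' j' := by
          rw [hA, Matrix.sub_apply]; ring
        rw [h1, abs_neg]
        have h2 : (Δ * D) i' j' = Δ i' j' * d j' := by
          rw [hD, Matrix.mul_diagonal]
        rw [h2, abs_mul]
        have habs : |d j'| = 1 := by
          by_cases h : j' = j <;> simp [hd, h]
        rw [habs, mul_one, abs_of_nonneg (hΔ i' j')]
      · -- value: A⁻¹ j j = β/(2β-1)
        have hDE : D = 1 - (2 : ℝ) • E := by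
          rw [hD, hE, hd]
          exact diag_pm_eq j
        have hEHE : E * Hbar * E = β • E := by
          rw [hE, hβdef]
          exact EHE_eq j Hbar
        set M : Matrix (Fin n) (Fin n) ℝ := Hbar + c • (Hbar * E * Hbar) with hM
        have hA_eq : A = (D - Δ) * D := by
          rw [hA, Matrix.sub_mul, hD2]
        have hDsub : D - Δ = B - (2 : ℝ) • E := by
          rw [hDE, hB]; abel
        have hexpand : (D - Δ) * M = 1 + (c - 2 - 2 * (c * β)) • (E * Hbar) := by
          have e1 : B * (Hbar * E * Hbar) = E * Hbar := by
            calc B * (Hbar * E * Hbar) = (B * Hbar) * (E * Hbar) := by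
                  noncomm_ring
              _ = E * Hbar := by rw [hBH, Matrix.one_mul]
          have e2 : E * (Hbar * E * Hbar) = β • (E * Hbar) := by
            calc E * (Hbar * E * Hbar) = (E * Hbar * E) * Hbar := by
                  noncomm_ring
              _ = (β • E) * Hbar := by rw [hEHE]
              _ = β • (E * Hbar) := by rw [Matrix.smul_mul]
          calc (D - Δ) * M = (B - (2 : ℝ) • E) * (Hbar + c • (Hbar * E * Hbar)) := by
                rw [hDsub, hM]
            _ = B * Hbar + c • (B * (Hbar * E * Hbar))
                - ((2 : ℝ) • (E * Hbar) + ((2 : ℝ) * c) • (E * (Hbar * E * Hbar))) := by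
                rw [Matrix.sub_mul, Matrix.mul_add, Matrix.mul_add, Matrix.mul_smul,
                  Matrix.smul_mul, Matrix.smul_mul, Matrix.mul_smul, smul_smul]
            _ = 1 + c • (E * Hbar)
                - ((2 : ℝ) • (E * Hbar) + ((2 : ℝ) * c) • (β • (E * Hbar))) := by
                rw [hBH, e1, e2]
            _ = 1 + (c - 2 - 2 * (c * β)) • (E * Hbar) := by
                rw [smul_smul]
                rw [show (2 : ℝ) * c * β = 2 * (c * β) by ring]
                rw [sub_smul, sub_smul]
                abel
        have hcoef : c - 2 - 2 * (c * β) = 0 := by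
          rw [hc]; field_simp; ring
        have hright : A * (D * M) = 1 := by
          rw [hA_eq]
          calc (D - Δ) * D * (D * M) = (D - Δ) * (D * D) * M := by
                rw [Matrix.mul_assoc, Matrix.mul_assoc, Matrix.mul_assoc]
            _ = (D - Δ) * M := by rw [hD2, Matrix.mul_one]
            _ = 1 + (c - 2 - 2 * (c * β)) • (E * Hbar) := hexpand
            _ = 1 := by rw [hcoef, zero_smul, add_zero]
        have hAinveq : A⁻¹ = D * M := Matrix.inv_eq_right_inv hright
        rw [hAinveq]
        have hDM : (D * M) j j = d j * M j j := by
          rw [hD, Matrix.diagonal_mul]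
        have hHEH : (Hbar * E * Hbar) j j = β * β := by
          rw [hE, hβdef]
          exact HEH_eq j Hbar
        have hMjj : M j j = β + c * (β * β) := by
          rw [hM, Matrix.add_apply, Matrix.smul_apply, smul_eq_mul, hHEH, ← hβdef]
        have hdj : d j = -1 := by simp [hd]
        rw [hDM, hMjj, hdj, hc]
        have h3 : (2:ℝ) / (1 - 2 * β) = -(2 / (2 * β - 1)) := by rw [← div_neg, neg_sub]
        rw [h3]
        have ht : (2 * β - 1)⁻¹ * (2 * β - 1) = 1 := inv_mul_cancel₀ h2β'
        simp only [div_eq_mul_inv]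
        linear_combination (-β) * ht
    · -- lower bound
      rintro v ⟨A, hA, rfl⟩
      exact (hcol A hA j).2
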